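/- In any abstract argumentation framework, if S is admissible (conflict-free and S ⊆ Acc(S)), then there exists a complete extension E with S ⊆ E (namely, the least fixpoint of Acc above S). -/
import Mathlib


variable {α : Type*}

/-- Defeated arguments w.r.t. S: attacked by some member of S. -/
def defSet (Ω : α → α → Prop) (S : Set α) : Set α := {a | ∃ b ∈ S, Ω b a}

/-- Acceptable arguments w.r.t. S: all attackers are defeated by S. -/
def accSet (Ω : α → α → Prop) (S : Set α) : Set α := {a | ∀ b, Ω b a → b ∈ defSet Ω S}

def ConflictFree (Ω : α → α → Prop) (S : Set α) : Prop := S ∩ defSet Ω S = ∅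

def CompleteExt (Ω : α → α → Prop) (S : Set α) : Prop :=
  ConflictFree Ω S ∧ S = accSet Ω S

def PreferredExt (Ω : α → α → Prop) (S : Set α) : Prop :=
  CompleteExt Ω S ∧ ∀ T, CompleteExt Ω T → S ⊆ T → S = T

def StableExt (Ω : α → α → Prop) (S : Set α) : Prop :=
  PreferredExt Ω S ∧ S ∪ defSet Ω S = Set.univ

lemma defSet_mono (Ω : α → α → Prop) {S T : Set α} (h : S ⊆ T) :
    defSet Ω S ⊆ defSet Ω T := by
  rintro a ⟨b, hb, hΩ⟩; exact ⟨b, h hb, hΩ⟩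

lemma accSet_mono (Ω : α → α → Prop) {S T : Set α} (h : S ⊆ T) :
    accSet Ω S ⊆ accSet Ω T := by
  intro a ha b hΩ; exact defSet_mono Ω h (ha b hΩ)

/-- Fundamental lemma: admissibility is preserved by Acc. -/
lemma acc_admissible (Ω : α → α → Prop) {S : Set α}
    (hcf : ConflictFree Ω S) (hadm : S ⊆ accSet Ω S) :
    ConflictFree Ω (accSet Ω S) ∧ accSet Ω S ⊆ accSet Ω (accSet Ω S) := by
  constructor
  · rw [ConflictFree, Set.eq_empty_iff_forall_notMem]
    rintro a ⟨ha, b, hb, hΩ⟩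
    obtain ⟨c, hc, hΩc⟩ := ha b hΩ
    obtain ⟨d, hd, hΩd⟩ := hb c hΩc
    have : c ∈ S ∩ defSet Ω S := ⟨hc, d, hd, hΩd⟩
    rw [hcf] at this; exact this
  · exact accSet_mono Ω hadm

theorem admissible_subset_complete [Finite α] (Ω : α → α → Prop) (S : Set α)
    (hcf : ConflictFree Ω S) (hadm : S ⊆ accSet Ω S) :
    ∃ E, CompleteExt Ω E ∧ S ⊆ E := by
  set g : ℕ → Set α := fun n => (accSet Ω)^[n] S with hg
  have step : ∀ n, ConflictFree Ω (g n) ∧ g n ⊆ g (n+1) := by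
    intro n
    induction n with
    | zero => exact ⟨hcf, hadm⟩
    | succ m ih =>
      have h2 : g m ⊆ accSet Ω (g m) := by
        have := ih.2; simpa [hg, Function.iterate_succ_apply'] using this
      have := acc_admissible Ω ih.1 h2
      constructor
      · simpa [hg, Function.iterate_succ_apply'] using this.1
      · have := this.2
        simpa [hg, Function.iterate_succ_apply'] using this
  have mono : Monotone g := monotone_nat_of_le_succ fun n => (step n).2
  -- the chain stabilizes since Set α is finite
  have : ∃ m n, m ≠ n ∧ g m = g n := by
    obtain ⟨m, n, hne, h⟩ := Finite.exists_ne_map_eq_of_infinite g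
    exact ⟨m, n, hne, h⟩
  obtain ⟨m, n, hne, hmn⟩ := this
  wlog hlt : m < n generalizing m n
  · exact this n m (Ne.symm hne) hmn.symm (hne.lt_or_gt.resolve_left hlt)
  have hfix : g (m+1) = g m := by
    apply le_antisymm
    · calc g (m+1) ≤ g n := mono hlt
      _ = g m := hmn.symm
    · exact (step m).2
  refine ⟨g m, ⟨(step m).1, ?_⟩, ?_⟩
  · have : g (m+1) = accSet Ω (g m) := by
      simp [hg, Function.iterate_succ_apply']
    rw [← this, hfix]
  · have : g 0 = S := rfl
    rw [← this]; exact mono (Nat.zero_le m)
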